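/- Let α be a partition of n and h a positive integer. The h-weight w_h(α), defined as the maximum number of h-hooks that can be successively removed from α, equals the number of nodes (i,j) of α whose hook length h^α_{i,j} is divisible by h. -/

import Mathlib

open scoped Classical

/-- A function `α : ℕ → ℕ` (listing the parts, 0-indexed, weakly decreasing,
finitely supported) is a partition of `n`. -/
def IsPartitionFun (α : ℕ → ℕ) (n : ℕ) : Prop :=
  Antitone α ∧ (Function.support α).Finite ∧ ∑ᶠ i, α i = n

/-- A list of parts (weakly decreasing, positive) is a partition of `n`. -/
def IsPartitionList (β : List ℕ) (n : ℕ) : Prop :=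
  β.Pairwise (· ≥ ·) ∧ (∀ b ∈ β, 0 < b) ∧ β.sum = n

/-- The conjugate (transpose) partition: `conjPart α j` is the number of rows `i`
with `α i > j`, i.e. the length of column `j` (0-indexed). -/
noncomputable def conjPart (α : ℕ → ℕ) (j : ℕ) : ℕ :=
  Set.ncard {i | j < α i}

/-- Hook length at the (0-indexed) node `(i, j)`. -/
noncomputable def hookLen (α : ℕ → ℕ) (i j : ℕ) : ℕ :=
  (α i - j) + (conjPart α j - i) - 1

/-- Leg length at the (0-indexed) node `(i, j)`. -/
noncomputable def legLen (α : ℕ → ℕ) (i j : ℕ) : ℕ :=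
  conjPart α j - i - 1

/-- The partition obtained by removing the rim hook of the `(i,j)`-hook. -/
noncomputable def removeHook (α : ℕ → ℕ) (i j : ℕ) : ℕ → ℕ := fun t =>
  if t < i then α t
  else if t + 1 < conjPart α j then α (t + 1) - 1
  else if t + 1 = conjPart α j then j
  else α t

/-- The value `χ^α(β)` of the irreducible character of the symmetric group
indexed by the partition `α`, at the conjugacy class of cycle type `β`,
defined via the Murnaghan–Nakayama rule. -/
noncomputable def charValue (α : ℕ → ℕ) : List ℕ → ℤ
  | [] => if ∀ i, α i = 0 then 1 else 0
  | b :: rest =>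
      ∑ᶠ (i : ℕ), ∑ᶠ (j : ℕ),
        if j < α i ∧ hookLen α i j = b then
          (-1) ^ legLen α i j * charValue (removeHook α i j) rest
        else 0

/-- The degree of `χ^α`, i.e. its value on the identity `(1^n)`. -/
noncomputable def charDegree (α : ℕ → ℕ) (n : ℕ) : ℤ :=
  charValue α (List.replicate n 1)

set_option linter.unusedSectionVars false
set_option maxHeartbeats 1000000

def bF (α : ℕ → ℕ) (i : ℕ) : ℤ := (α i : ℤ) - i
noncomputable def gF (α : ℕ → ℕ) (j : ℕ) : ℤ := (j : ℤ) + 1 - conjPart α j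
def Bs (α : ℕ → ℕ) : Set ℤ := Set.range (bF α)
def invS (h : ℕ) (B : Set ℤ) : Set (ℤ × ℤ) :=
  {q | q.1 ∈ B ∧ q.2 ∉ B ∧ q.2 < q.1 ∧ (h:ℤ) ∣ q.1 - q.2}

lemma dc_eq_Iio (S : Set ℕ) (hfin : S.Finite) (hdc : ∀ a b : ℕ, a ≤ b → b ∈ S → a ∈ S) :
    S = Set.Iio S.ncard := by
  rcases S.eq_empty_or_nonempty with rfl | hne
  · ext x; simp
  · have hbdd : BddAbove S := hfin.bddAbove
    have hm : sSup S ∈ S := Nat.sSup_mem hne hbdd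
    obtain ⟨m, hS⟩ : ∃ m, S = Set.Iic m := by
      refine ⟨sSup S, Set.Subset.antisymm (fun x hx => le_csSup hbdd hx)
        (fun x hx => hdc x _ hx hm)⟩
    subst hS
    have h2 : (Set.Iic m).ncard = m + 1 := by
      rw [← Finset.coe_Iic, Set.ncard_coe_finset, Nat.card_Iic]
    rw [h2]; ext x; simp [Nat.lt_succ_iff]

section
variable {α : ℕ → ℕ} (hA : Antitone α) (hF : (Function.support α).Finite)

include hF in
lemma col_fin (j : ℕ) : {i | j < α i}.Finite := by
  apply hF.subset; intro i hi; simp only [Set.mem_setOf_eq] at hi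
  simp [Function.mem_support]; omega

include hA hF in
lemma conj_lt_iff (i j : ℕ) : i < conjPart α j ↔ j < α i := by
  have h1 : {i | j < α i} = Set.Iio (conjPart α j) := by
    apply dc_eq_Iio _ (col_fin hF j)
    intro a b hab hb
    exact lt_of_lt_of_le hb (hA hab)
  constructor
  · intro hi; have : i ∈ Set.Iio (conjPart α j) := hi
    rw [← h1] at this; exact this
  · intro hj; have : i ∈ {i | j < α i} := hj
    rw [h1] at this; exact this

include hA in
lemma bF_strictAnti : StrictAnti (bF α) := by
  apply strictAnti_nat_of_succ_lt
  intro i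
  have := hA (Nat.le_succ i)
  simp only [Nat.succ_eq_add_one] at this
  unfold bF; push_cast; omega

lemma strictAnti_gap {f : ℕ → ℤ} (hf : StrictAnti f) (i d : ℕ) :
    f (i + d) + d ≤ f i := by
  induction d with
  | zero => simp
  | succ d ih =>
    have : f (i + (d + 1)) < f (i + d) := hf (by omega)
    push_cast at *; omega

include hF in
lemma conj_anti : Antitone (conjPart α) := by
  intro a b hab
  unfold conjPart
  apply Set.ncard_le_ncard _ (col_fin hF a)
  intro i hi; simp only [Set.mem_setOf_eq] at hi ⊢; omega

include hA hF in
lemma gF_strictMono : StrictMono (gF α) := by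
  apply strictMono_nat_of_lt_succ
  intro j
  have := conj_anti hF (Nat.le_succ j)
  simp only [Nat.succ_eq_add_one] at this
  unfold gF; push_cast; omega

include hA hF in
lemma bF_ne_gF (i j : ℕ) : bF α i ≠ gF α j := by
  intro he
  unfold bF gF at he
  by_cases hj : j < α i
  · have h1 : i < conjPart α j := (conj_lt_iff hA hF i j).2 hj
    omega
  · have h1 : ¬ i < conjPart α j := fun hc => hj ((conj_lt_iff hA hF i j).1 hc)
    omega

include hA hF in
lemma cover {z : ℤ} (hz : z ∉ Bs α) : ∃ j, gF α j = z := by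
  classical
  have hbs := bF_strictAnti hA
  set I : Set ℕ := {i | z ≤ bF α i} with hI
  have hIfin : I.Finite := by
    have : I ⊆ Set.Iic (bF α 0 - z).toNat := by
      intro i hi
      have h1 : bF α 0 + 0 ≥ bF α (0 + i) + i := by
        have := strictAnti_gap hbs 0 i; omega
      simp only [Set.mem_setOf_eq, hI] at hi
      simp only [Set.mem_Iic]
      simp only [Nat.zero_add] at h1
      omega
    exact (Set.finite_Iic _).subset this
  have hIdc : ∀ a b : ℕ, a ≤ b → b ∈ I → a ∈ I := by
    intro a b hab hb
    simp only [Set.mem_setOf_eq, hI] at hb ⊢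
    exact le_trans hb (hbs.antitone hab)
  have hIio := dc_eq_Iio I hIfin hIdc
  set c := I.ncard with hc
  have hmem : ∀ i : ℕ, z ≤ bF α i ↔ i < c := by
    intro i
    constructor
    · intro hi; have : i ∈ I := hi; rw [hIio] at this; exact this
    · intro hi; have : i ∈ Set.Iio c := hi; rw [← hIio] at this; exact this
  have hne : ∀ i, bF α i ≠ z := fun i he => hz ⟨i, he⟩
  have hblt : bF α c < z := by
    have := (hmem c); omega
  have hzlow : -(c:ℤ) < z := by
    have : bF α c ≥ -(c:ℤ) := by unfold bF; push_cast; omega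
    omega
  refine ⟨(z + c - 1).toNat, ?_⟩
  set j : ℕ := (z + c - 1).toNat with hj
  have hjz : (j : ℤ) = z + c - 1 := Int.toNat_of_nonneg (by omega)
  have hcol : {i | j < α i} = Set.Iio c := by
    ext i
    simp only [Set.mem_setOf_eq, Set.mem_Iio]
    constructor
    · intro hji
      by_contra hic
      push_neg at hic
      have h1 : bF α i + (i - c : ℕ) ≤ bF α c := by
        have := strictAnti_gap hbs c (i - c)
        have he : c + (i - c) = i := by omega
        rw [he] at this; exact this
      have h2 : (α i : ℤ) = bF α i + i := by unfold bF; omega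
      omega
    · intro hic
      -- bF α i ≥ z + (c - i), strictly decreasing chain with bF α (c-1) ≥ z+1
      have hc1 : bF α (c-1) ≥ z + 1 := by
        have h1 : z ≤ bF α (c-1) := (hmem (c-1)).2 (by omega)
        have := hne (c-1); omega
      have h3 : bF α (c-1) + ((c-1) - i : ℕ) ≤ bF α i := by
        have := strictAnti_gap hbs i ((c-1) - i)
        have he : i + ((c-1) - i) = c - 1 := by omega
        rw [he] at this; exact this
      have h4 : (α i : ℤ) = bF α i + i := by unfold bF; omega
      have h5 : ((c - 1 - i : ℕ) : ℤ) = (c:ℤ) - 1 - i := by omega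
      rw [h5] at h3
      have h6 : (j:ℤ) < (α i : ℤ) := by omega
      exact_mod_cast h6
  have hconj : conjPart α j = c := by
    unfold conjPart; rw [hcol, ← Finset.coe_Iio, Set.ncard_coe_finset, Nat.card_Iio]
  unfold gF; rw [hconj]; omega

include hA hF in
lemma hook_eq (i j : ℕ) (hij : j < α i) : (hookLen α i j : ℤ) = bF α i - gF α j := by
  have h1 : i < conjPart α j := (conj_lt_iff hA hF i j).2 hij
  unfold hookLen bF gF
  omega

include hA hF in
lemma hook_pos (i j : ℕ) (hij : j < α i) : 0 < hookLen α i j := by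
  have h1 : i < conjPart α j := (conj_lt_iff hA hF i j).2 hij
  unfold hookLen; omega

include hA hF in
lemma gLt_iff (i j : ℕ) : gF α j < bF α i ↔ j < α i := by
  constructor
  · intro hlt
    by_contra hij
    push_neg at hij
    have h1 : conjPart α j ≤ i := by
      by_contra hc; push_neg at hc
      exact absurd ((conj_lt_iff hA hF i j).1 hc) (by omega)
    unfold gF bF at hlt
    omega
  · intro hij
    have h1 := hook_eq hA hF i j hij
    have h2 := hook_pos hA hF i j hij
    omega

include hA hF in
lemma count_eq (h : ℕ) :
    {p : ℕ × ℕ | p.2 < α p.1 ∧ h ∣ hookLen α p.1 p.2}.ncard = (invS h (Bs α)).ncard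
    ∧ (invS h (Bs α)).Finite := by
  classical
  set S := {p : ℕ × ℕ | p.2 < α p.1 ∧ h ∣ hookLen α p.1 p.2} with hS
  set F : ℕ × ℕ → ℤ × ℤ := fun p => (bF α p.1, gF α p.2) with hFdef
  have hbi := bF_strictAnti hA
  have hgi := gF_strictMono hA hF
  have hinj : Function.Injective F := by
    intro p q he
    have h1 : bF α p.1 = bF α q.1 := congrArg Prod.fst he
    have h2 : gF α p.2 = gF α q.2 := congrArg Prod.snd he
    have e1 := hbi.injective h1
    have e2 := hgi.injective h2
    exact Prod.ext e1 e2
  have himg : F '' S = invS h (Bs α) := by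
    ext q
    constructor
    · rintro ⟨⟨i, j⟩, ⟨hij, hdvd⟩, rfl⟩
      refine ⟨⟨i, rfl⟩, ?_, ?_, ?_⟩
      · rintro ⟨i', hi'⟩; exact bF_ne_gF hA hF i' j hi'
      · exact (gLt_iff hA hF i j).2 hij
      · have h2 : (h:ℤ) ∣ (hookLen α i j : ℤ) := Int.natCast_dvd_natCast.2 hdvd
        rw [hook_eq hA hF i j hij] at h2; exact h2
    · rintro ⟨⟨i, hi⟩, hy, hlt, hdvd⟩
      obtain ⟨j, hj⟩ := cover hA hF hy
      have hij : j < α i := by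
        apply (gLt_iff hA hF i j).1; rw [hi, hj]; exact hlt
      refine ⟨(i, j), ⟨hij, ?_⟩, ?_⟩
      · have h2 : (h:ℤ) ∣ (hookLen α i j : ℤ) := by
          rw [hook_eq hA hF i j hij, hi, hj]; exact hdvd
        exact_mod_cast h2
      · simp only [hFdef]; rw [hi, hj]
  have hSfin : S.Finite := by
    obtain ⟨N, hN⟩ := hF.bddAbove
    apply Set.Finite.subset ((Set.finite_Iic N).prod (Set.finite_Iio (α 0 + 1)))
    intro p hp
    obtain ⟨hij, -⟩ := hp
    constructor
    · by_cases h0 : α p.1 = 0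
      · simp only [Set.mem_Iic]; omega
      · exact hN (Function.mem_support.2 h0)
    · have := hA (Nat.zero_le p.1); simp only [Set.mem_Iio]; omega
  have h1 : S.ncard = (F '' S).ncard := (Set.ncard_image_of_injective S hinj).symm
  refine ⟨by rw [h1, himg], himg ▸ hSfin.image F⟩
end

lemma dvd_gap {h : ℤ} (hh : 0 < h) {d : ℤ} (hd : 0 < d) (hdvd : h ∣ d) (hne : d ≠ h) :
    2 * h ≤ d := by
  obtain ⟨k, rfl⟩ := hdvd
  have hk1 : 1 ≤ k := by nlinarith
  have hk3 : 2 ≤ k := by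
    rcases eq_or_lt_of_le hk1 with he | hlt
    · exact absurd (by rw [← he]; ring) hne
    · omega
  have := mul_le_mul_of_nonneg_left hk3 hh.le
  linarith

noncomputable def mv (x e : ℤ) : ℤ × ℤ → ℤ × ℤ := fun q =>
  if q.1 = x ∧ q.2 = x - e then q
  else if q.1 = x then (x - e, q.2)
  else if q.2 = x - e then (q.1, x)
  else q

noncomputable def mv' (x e : ℤ) : ℤ × ℤ → ℤ × ℤ := fun q =>
  if q.1 = x ∧ q.2 = x - e then q
  else if q.1 = x - e then (x, q.2)
  else if q.2 = x then (q.1, x - e)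
  else q

section mvlem
variable {x e : ℤ}

lemma mv_special : mv x e (x, x - e) = (x, x - e) := by
  unfold mv; dsimp only; rw [if_pos ⟨rfl, rfl⟩]

lemma mv_row {b : ℤ} (hb : b ≠ x - e) : mv x e (x, b) = (x - e, b) := by
  unfold mv; dsimp only
  rw [if_neg (fun hc => hb hc.2), if_pos rfl]

lemma mv_col {a : ℤ} (ha : a ≠ x) : mv x e (a, x - e) = (a, x) := by
  unfold mv; dsimp only
  rw [if_neg (fun hc => ha hc.1), if_neg ha, if_pos rfl]

lemma mv_id {a b : ℤ} (ha : a ≠ x) (hb : b ≠ x - e) : mv x e (a, b) = (a, b) := by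
  unfold mv; dsimp only
  rw [if_neg (fun hc => ha hc.1), if_neg ha, if_neg hb]

variable (he : e ≠ 0)
include he

lemma mv'_special : mv' x e (x, x - e) = (x, x - e) := by
  unfold mv'; dsimp only; rw [if_pos ⟨rfl, rfl⟩]

lemma mv'_row {b : ℤ} : mv' x e (x - e, b) = (x, b) := by
  unfold mv'; dsimp only
  rw [if_neg (fun hc : x - e = x ∧ b = x - e => he (by omega)), if_pos rfl]

lemma mv'_col {a : ℤ} (ha : a ≠ x) (ha2 : a ≠ x - e) : mv' x e (a, x) = (a, x - e) := by
  unfold mv'; dsimp only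
  rw [if_neg (fun hc : a = x ∧ x = x - e => he (by omega)), if_neg ha2, if_pos rfl]

lemma mv'_id {a b : ℤ} (ha : a ≠ x - e) (hb : b ≠ x)
    (hab : ¬(a = x ∧ b = x - e)) : mv' x e (a, b) = (a, b) := by
  unfold mv'; dsimp only
  rw [if_neg hab, if_neg ha, if_neg hb]

end mvlem

lemma invS_move (h : ℕ) (hh : 0 < h) (B : Set ℤ) (x : ℤ) (hx : x ∈ B) (hxh : x - h ∉ B)
    (hfin : (invS h B).Finite) :
    (invS h (insert (x - (h:ℤ)) (B \ {x}))).ncard + 1 = (invS h B).ncard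
    ∧ (invS h (insert (x - (h:ℤ)) (B \ {x}))).Finite := by
  classical
  have hh' : (0:ℤ) < h := by exact_mod_cast hh
  have he : (h:ℤ) ≠ 0 := by omega
  set B' : Set ℤ := insert (x - (h:ℤ)) (B \ {x}) with hB'
  set g : ℤ × ℤ → ℤ × ℤ := mv x h with hg
  have hxne : x ≠ x - (h:ℤ) := by omega
  have hmemB' : ∀ z : ℤ, z ∈ B' ↔ (z = x - h ∨ (z ∈ B ∧ z ≠ x)) := by
    intro z; simp [hB', Set.mem_insert_iff, Set.mem_diff]
  have hspecial : (x, x - (h:ℤ)) ∈ invS h B :=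
    ⟨hx, hxh, by omega, ⟨1, by ring⟩⟩
  have himg : g '' invS h B = insert (x, x - (h:ℤ)) (invS h B') := by
    ext q
    simp only [Set.mem_image, Set.mem_insert_iff]
    constructor
    · rintro ⟨⟨a0, b0⟩, ⟨hma, hmb, hmlt, hmdvd⟩, hge⟩
      simp only at hma hmb hmlt hmdvd
      by_cases h2 : a0 = x
      · by_cases h3 : b0 = x - (h:ℤ)
        · left; rw [hg, h2, h3, mv_special] at hge; exact hge.symm
        · right
          rw [hg, h2, mv_row h3] at hge
          have hbb : b0 < x - h := by
            have := dvd_gap hh' (by omega : (0:ℤ) < a0 - b0) hmdvd (by omega)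
            omega
          rw [← hge]
          refine ⟨(hmemB' _).2 (Or.inl rfl), ?_, by omega, ?_⟩
          · intro hc
            rcases (hmemB' _).1 hc with hc1 | ⟨hc2, -⟩
            · exact h3 hc1
            · exact hmb hc2
          · obtain ⟨k, hk⟩ := hmdvd; exact ⟨k - 1, by push_cast; linarith⟩
      · by_cases h3 : b0 = x - (h:ℤ)
        · rw [hg, h3, mv_col h2] at hge
          have haa : x < a0 := by
            have hne2 : a0 - b0 ≠ h := by intro hc; exact h2 (by omega)
            have := dvd_gap hh' (by omega : (0:ℤ) < a0 - b0) hmdvd hne2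
            omega
          rw [← hge]
          right
          refine ⟨(hmemB' _).2 (Or.inr ⟨hma, h2⟩), ?_, by omega, ?_⟩
          · intro hc
            rcases (hmemB' _).1 hc with hc1 | ⟨-, hc2⟩
            · omega
            · exact hc2 rfl
          · obtain ⟨k, hk⟩ := hmdvd; exact ⟨k - 1, by push_cast; linarith⟩
        · rw [hg, mv_id h2 h3] at hge
          rw [← hge]
          right
          refine ⟨(hmemB' _).2 (Or.inr ⟨hma, h2⟩), ?_, hmlt, hmdvd⟩
          intro hc
          rcases (hmemB' _).1 hc with hc1 | ⟨hc2, -⟩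
          · exact h3 hc1
          · exact hmb hc2
    · rintro (he2 | hm)
      · exact ⟨(x, x - h), hspecial, by rw [hg, mv_special, he2]⟩
      · obtain ⟨a, b⟩ := q
        obtain ⟨hma, hmb, hmlt, hmdvd⟩ := hm
        simp only at hma hmb hmlt hmdvd
        rcases (hmemB' a).1 hma with ha1 | ⟨ha2, ha3⟩
        · have hbB : b ∉ B := by
            intro hc
            have hbx : b ≠ x := by omega
            exact hmb ((hmemB' b).2 (Or.inr ⟨hc, hbx⟩))
          refine ⟨(x, b), ⟨hx, hbB, by omega, ?_⟩, ?_⟩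
          · obtain ⟨k, hk⟩ := hmdvd; exact ⟨k + 1, by push_cast; linarith⟩
          · rw [hg, mv_row (by omega : b ≠ x - (h:ℤ)), ← ha1]
        · by_cases hbx : b = x
          · refine ⟨(a, x - h), ⟨ha2, hxh, by omega, ?_⟩, ?_⟩
            · obtain ⟨k, hk⟩ := hmdvd; exact ⟨k + 1, by push_cast; linarith⟩
            · rw [hg, mv_col ha3, hbx]
          · have hbB : b ∉ B := by
              intro hc
              exact hmb ((hmemB' b).2 (Or.inr ⟨hc, hbx⟩))
            have hbxh : b ≠ x - (h:ℤ) := by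
              intro hc; exact hmb ((hmemB' b).2 (Or.inl hc))
            exact ⟨(a, b), ⟨ha2, hbB, hmlt, hmdvd⟩, by rw [hg, mv_id ha3 hbxh]⟩
  have hginv : ∀ q ∈ invS h B, mv' x h (g q) = q := by
    rintro ⟨a, b⟩ ⟨hma, hmb, hmlt, hmdvd⟩
    simp only at hma hmb hmlt hmdvd
    by_cases h2 : a = x
    · by_cases h3 : b = x - (h:ℤ)
      · rw [hg, h2, h3, mv_special, mv'_special he]
      · rw [hg, h2, mv_row h3, mv'_row he]
    · by_cases h3 : b = x - (h:ℤ)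
      · have ha0 : a ≠ x - (h:ℤ) := fun hc => hxh (hc ▸ hma)
        rw [hg, h3, mv_col h2, mv'_col he h2 ha0]
      · have ha0 : a ≠ x - (h:ℤ) := fun hc => hxh (hc ▸ hma)
        have hb0 : b ≠ x := fun hc => hmb (hc ▸ hx)
        rw [hg, mv_id h2 h3, mv'_id he ha0 hb0 (fun hc => h2 hc.1)]
  have hinjOn : Set.InjOn g (invS h B) := by
    intro p hp q hq heq
    rw [← hginv p hp, ← hginv q hq, heq]
  have hnotmem : (x, x - (h:ℤ)) ∉ invS h B' := by
    rintro ⟨-, hc, -, -⟩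
    exact hc ((hmemB' _).2 (Or.inl rfl))
  have hfinB' : (invS h B').Finite := by
    have hsub : invS h B' ⊆ g '' invS h B := by
      rw [himg]; exact Set.subset_insert _ _
    exact (hfin.image g).subset hsub
  constructor
  · have h1 : (invS h B).ncard = (g '' invS h B).ncard :=
      (Set.ncard_image_of_injOn hinjOn).symm
    rw [h1, himg, Set.ncard_insert_of_notMem hnotmem hfinB']
  · exact hfinB'

section rem
variable {α : ℕ → ℕ} (hA : Antitone α) (hF : (Function.support α).Finite)

include hA hF in
lemma remove_spec (i j : ℕ) (hij : j < α i) :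
    Antitone (removeHook α i j) ∧ (Function.support (removeHook α i j)).Finite ∧
    Bs (removeHook α i j) = insert (gF α j) (Bs α \ {bF α i}) := by
  classical
  set c := conjPart α j with hc
  have hic : i < c := (conj_lt_iff hA hF i j).2 hij
  have hbs := bF_strictAnti hA
  set α' := removeHook α i j with ha'
  have hv : ∀ t, bF α' t =
      if t < i then bF α t else if t + 1 < c then bF α (t+1)
      else if t + 1 = c then gF α j else bF α t := by
    intro t
    by_cases h1 : t < i
    · rw [if_pos h1]; unfold bF; rw [ha']; unfold removeHook; rw [if_pos h1]
    · rw [if_neg h1]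
      by_cases h2 : t + 1 < c
      · rw [if_pos h2]
        have hα1 : 0 < α (t+1) := by
          have := (conj_lt_iff hA hF (t+1) j).1 (by omega); omega
        unfold bF; rw [ha']; unfold removeHook; rw [if_neg h1, if_pos h2]
        push_cast [Nat.cast_sub (by omega : 1 ≤ α (t+1))]; ring
      · rw [if_neg h2]
        by_cases h3 : t + 1 = c
        · rw [if_pos h3]
          unfold bF; rw [ha']; unfold removeHook; rw [if_neg h1, if_neg h2, if_pos h3]
          unfold gF; rw [← hc]; omega
        · rw [if_neg h3]
          unfold bF; rw [ha']; unfold removeHook; rw [if_neg h1, if_neg h2, if_neg h3]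
  have hgb : gF α j < bF α i := (gLt_iff hA hF i j).2 hij
  have key : ∀ t, bF α' (t+1) < bF α' t := by
    intro t
    rw [hv t, hv (t+1)]
    by_cases h1 : t < i
    · rw [if_pos h1]
      by_cases hb1 : t + 1 < i
      · rw [if_pos hb1]; exact hbs (by omega)
      · rw [if_neg hb1]
        by_cases hb2 : t + 2 < c
        · rw [if_pos hb2]; exact hbs (by omega)
        · rw [if_neg hb2]
          by_cases hb3 : t + 2 = c
          · rw [if_pos hb3]
            exact lt_trans hgb (hbs (by omega))
          · exfalso; omega
    · rw [if_neg h1]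
      by_cases h2 : t + 1 < c
      · rw [if_pos h2, if_neg (by omega : ¬ t + 1 < i)]
        by_cases hb2 : t + 2 < c
        · rw [if_pos hb2]; exact hbs (by omega)
        · rw [if_neg hb2]
          have hb3 : t + 2 = c := by omega
          rw [if_pos hb3]
          have hj2 : j < α (t+1) := (conj_lt_iff hA hF (t+1) j).1 (by omega)
          exact (gLt_iff hA hF (t+1) j).2 hj2
      · rw [if_neg h2]
        by_cases h3 : t + 1 = c
        · rw [if_pos h3,
            if_neg (by omega : ¬ t + 1 < i), if_neg (by omega : ¬ t + 1 + 1 < c),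
            if_neg (by omega : ¬ t + 1 + 1 = c)]
          have hαc : ¬ j < α c := by
            intro hcon
            have := (conj_lt_iff hA hF c j).2 hcon; omega
          have hαc2 : α c ≤ j := by omega
          rw [h3]
          unfold bF gF; rw [← hc]; omega
        · rw [if_neg h3,
            if_neg (by omega : ¬ t + 1 < i), if_neg (by omega : ¬ t + 1 + 1 < c),
            if_neg (by omega : ¬ t + 1 + 1 = c)]
          exact hbs (by omega)
  have hAnti : Antitone α' := by
    apply antitone_nat_of_succ_le
    intro t
    have := key t
    unfold bF at this; omega
  obtain ⟨N, hN⟩ := hF.bddAbove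
  have hsupp : Function.support α' ⊆ Set.Iic (max N c) := by
    intro t ht
    by_contra hcon
    simp only [Set.mem_Iic] at hcon
    push_neg at hcon
    have h1 : ¬ t < i := by omega
    have h2 : ¬ t + 1 < c := by omega
    have h3 : ¬ t + 1 = c := by omega
    have he : α' t = α t := by rw [ha']; unfold removeHook; rw [if_neg h1, if_neg h2, if_neg h3]
    have hα0 : α t = 0 := by
      by_contra hne
      exact absurd (hN (Function.mem_support.2 hne)) (by omega)
    exact ht (by rw [he, hα0])
  have hFin : (Function.support α').Finite := (Set.finite_Iic _).subset hsupp
  refine ⟨hAnti, hFin, ?_⟩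
  have hmem : ∀ z : ℤ, z ∈ insert (gF α j) (Bs α \ {bF α i}) ↔
      z = gF α j ∨ (z ∈ Bs α ∧ z ≠ bF α i) := by
    intro z; simp [Set.mem_insert_iff, Set.mem_diff]
  ext z
  rw [hmem z]
  constructor
  · rintro ⟨t, ht⟩
    rw [hv t] at ht
    by_cases h1 : t < i
    · rw [if_pos h1] at ht
      refine Or.inr ⟨⟨t, ht⟩, ?_⟩
      rw [← ht]
      exact fun hcon => (by omega : t ≠ i) (hbs.injective hcon)
    · rw [if_neg h1] at ht
      by_cases h2 : t + 1 < c
      · rw [if_pos h2] at ht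
        refine Or.inr ⟨⟨t + 1, ht⟩, ?_⟩
        rw [← ht]
        exact fun hcon => (by omega : t + 1 ≠ i) (hbs.injective hcon)
      · rw [if_neg h2] at ht
        by_cases h3 : t + 1 = c
        · rw [if_pos h3] at ht; exact Or.inl ht.symm
        · rw [if_neg h3] at ht
          refine Or.inr ⟨⟨t, ht⟩, ?_⟩
          rw [← ht]
          exact fun hcon => (by omega : t ≠ i) (hbs.injective hcon)
  · rintro (hz | ⟨⟨t, ht⟩, hne⟩)
    · refine ⟨c - 1, ?_⟩
      rw [hv (c-1), if_neg (by omega : ¬ c - 1 < i), if_neg (by omega : ¬ c - 1 + 1 < c),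
        if_pos (by omega : c - 1 + 1 = c)]
      exact hz.symm
    · have htne : t ≠ i := by
        intro hcon; exact hne (by rw [← ht, hcon])
      by_cases h1 : t < i
      · exact ⟨t, by rw [hv t, if_pos h1]; exact ht⟩
      · by_cases h2 : t < c
        · refine ⟨t - 1, ?_⟩
          rw [hv (t-1), if_neg (by omega : ¬ t - 1 < i), if_pos (by omega : t - 1 + 1 < c)]
          rw [(by omega : t - 1 + 1 = t)]
          exact ht
        · refine ⟨t, ?_⟩
          rw [hv t, if_neg h1, if_neg (by omega : ¬ t + 1 < c), if_neg (by omega : ¬ t + 1 = c)]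
          exact ht

include hA hF in
lemma step {h i j : ℕ} (hh : 0 < h) (hij : j < α i) (hlen : hookLen α i j = h)
    (hfin : (invS h (Bs α)).Finite) :
    Antitone (removeHook α i j) ∧ (Function.support (removeHook α i j)).Finite ∧
    (invS h (Bs (removeHook α i j))).Finite ∧
    (invS h (Bs (removeHook α i j))).ncard + 1 = (invS h (Bs α)).ncard := by
  obtain ⟨h1, h2, h3⟩ := remove_spec hA hF i j hij
  have hgeq : gF α j = bF α i - (h:ℤ) := by
    have := hook_eq hA hF i j hij; rw [hlen] at this; omega
  have hxB : bF α i ∈ Bs α := ⟨i, rfl⟩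
  have hxhB : bF α i - (h:ℤ) ∉ Bs α := by
    rw [← hgeq]; rintro ⟨i', hi'⟩; exact bF_ne_gF hA hF i' j hi'
  have hmv := invS_move h hh (Bs α) (bF α i) hxB hxhB hfin
  rw [hgeq] at h3
  rw [h3]
  exact ⟨h1, h2, hmv.2, hmv.1⟩

include hA hF in
lemma exists_hook {h : ℕ} (hh : 0 < h) (hne : (invS h (Bs α)).Nonempty) :
    ∃ i j, j < α i ∧ hookLen α i j = h := by
  have hh' : (0:ℤ) < h := by exact_mod_cast hh
  have key : ∀ m : ℕ, ∀ a b : ℤ, (a - b).toNat ≤ m → a ∈ Bs α → b ∉ Bs α → b < a →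
      (h:ℤ) ∣ a - b → ∃ x ∈ Bs α, x - (h:ℤ) ∉ Bs α := by
    intro m
    induction m with
    | zero => intro a b hm ha hb hlt hdvd; omega
    | succ m ih =>
      intro a b hm ha hb hlt hdvd
      by_cases hcc : a - (h:ℤ) ∈ Bs α
      · have hbne : b ≠ a - (h:ℤ) := fun hcon => hb (hcon ▸ hcc)
        have hgap : 2 * (h:ℤ) ≤ a - b := dvd_gap hh' (by omega) hdvd (by omega)
        apply ih (a - h) b (by omega) hcc hb (by omega)
        obtain ⟨k, hk⟩ := hdvd; exact ⟨k - 1, by push_cast; linarith⟩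
      · exact ⟨a, ha, hcc⟩
  obtain ⟨⟨a, b⟩, ha, hb, hlt, hdvd⟩ := hne
  obtain ⟨x, hxB, hxh⟩ := key (a - b).toNat a b le_rfl ha hb hlt hdvd
  obtain ⟨i, hi⟩ := hxB
  obtain ⟨j, hj⟩ := cover hA hF hxh
  have hij : j < α i := (gLt_iff hA hF i j).1 (by rw [hi, hj]; omega)
  refine ⟨i, j, hij, ?_⟩
  have hhe := hook_eq hA hF i j hij
  rw [hi, hj] at hhe
  omega
end rem

open scoped Classical in
noncomputable def greedy (h : ℕ) (α : ℕ → ℕ) : ℕ → ℕ → ℕ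
  | 0 => α
  | (t+1) =>
    if hx : ∃ p : ℕ × ℕ, p.2 < greedy h α t p.1 ∧ hookLen (greedy h α t) p.1 p.2 = h
    then removeHook (greedy h α t) hx.choose.1 hx.choose.2
    else greedy h α t

theorem stmt_17_aux (n : ℕ) (α : ℕ → ℕ) (hα : IsPartitionFun α n) (h : ℕ) (hh : 0 < h) :
    IsGreatest {c : ℕ | ∃ f : ℕ → ℕ → ℕ, f 0 = α ∧
        ∀ t < c, ∃ i j, j < f t i ∧ hookLen (f t) i j = h ∧
          f (t + 1) = removeHook (f t) i j}
      (Set.ncard {p : ℕ × ℕ | p.2 < α p.1 ∧ h ∣ hookLen α p.1 p.2}) := by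
  classical
  obtain ⟨hA, hF, -⟩ := hα
  obtain ⟨hcnt, hfin0⟩ := count_eq hA hF h
  rw [hcnt]
  constructor
  · -- membership: greedy removal sequence
    have inv : ∀ t, t ≤ (invS h (Bs α)).ncard →
        Antitone (greedy h α t) ∧ (Function.support (greedy h α t)).Finite ∧
        (invS h (Bs (greedy h α t))).Finite ∧
        (invS h (Bs (greedy h α t))).ncard = (invS h (Bs α)).ncard - t := by
      intro t
      induction t with
      | zero => intro _; exact ⟨hA, hF, hfin0, by simp [greedy]⟩
      | succ t ih =>
        intro ht
        obtain ⟨ia, iF, ifin, icard⟩ := ih (by omega)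
        have hpos : 0 < (invS h (Bs (greedy h α t))).ncard := by omega
        have hne : (invS h (Bs (greedy h α t))).Nonempty := by
          rcases Set.eq_empty_or_nonempty (invS h (Bs (greedy h α t))) with hE | hNE
          · rw [hE] at hpos; simp at hpos
          · exact hNE
        obtain ⟨i, j, hij, hlen⟩ := exists_hook ia iF hh hne
        have hx : ∃ p : ℕ × ℕ, p.2 < greedy h α t p.1 ∧ hookLen (greedy h α t) p.1 p.2 = h :=
          ⟨(i, j), hij, hlen⟩
        have hstep := step ia iF hh hx.choose_spec.1 hx.choose_spec.2 ifin
        have hgt : greedy h α (t+1) = removeHook (greedy h α t) hx.choose.1 hx.choose.2 := by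
          simp only [greedy]; rw [dif_pos hx]
        rw [hgt]
        refine ⟨hstep.1, hstep.2.1, hstep.2.2.1, ?_⟩
        have := hstep.2.2.2
        omega
    refine ⟨greedy h α, rfl, ?_⟩
    intro t ht
    obtain ⟨ia, iF, ifin, icard⟩ := inv t (by omega)
    have hpos : 0 < (invS h (Bs (greedy h α t))).ncard := by omega
    have hne : (invS h (Bs (greedy h α t))).Nonempty := by
      rcases Set.eq_empty_or_nonempty (invS h (Bs (greedy h α t))) with hE | hNE
      · rw [hE] at hpos; simp at hpos
      · exact hNE
    obtain ⟨i, j, hij, hlen⟩ := exists_hook ia iF hh hne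
    have hx : ∃ p : ℕ × ℕ, p.2 < greedy h α t p.1 ∧ hookLen (greedy h α t) p.1 p.2 = h :=
      ⟨(i, j), hij, hlen⟩
    refine ⟨hx.choose.1, hx.choose.2, hx.choose_spec.1, hx.choose_spec.2, ?_⟩
    simp only [greedy]; rw [dif_pos hx]
  · -- upper bound
    rintro c ⟨f, hf0, hfstep⟩
    have inv2 : ∀ t, t ≤ c → Antitone (f t) ∧ (Function.support (f t)).Finite ∧
        (invS h (Bs (f t))).Finite ∧
        (invS h (Bs (f t))).ncard + t = (invS h (Bs α)).ncard := by
      intro t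
      induction t with
      | zero => intro _; rw [hf0]; exact ⟨hA, hF, hfin0, by omega⟩
      | succ t ih =>
        intro ht
        obtain ⟨ia, iF, ifin, icard⟩ := ih (by omega)
        obtain ⟨i, j, hij, hlen, hfeq⟩ := hfstep t (by omega)
        have hstep := step ia iF hh hij hlen ifin
        rw [hfeq]
        refine ⟨hstep.1, hstep.2.1, hstep.2.2.1, ?_⟩
        have := hstep.2.2.2
        omega
    have := (inv2 c le_rfl).2.2.2
    omega

/-- The `h`-weight of `α` (the maximum number of `h`-hooks that can be successively
removed from `α`) equals the number of nodes of `α` with hook length divisible by `h`. -/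
theorem stmt_17 (n : ℕ) (α : ℕ → ℕ) (hα : IsPartitionFun α n) (h : ℕ) (hh : 0 < h) :
    IsGreatest {c : ℕ | ∃ f : ℕ → ℕ → ℕ, f 0 = α ∧
        ∀ t < c, ∃ i j, j < f t i ∧ hookLen (f t) i j = h ∧
          f (t + 1) = removeHook (f t) i j}
      (Set.ncard {p : ℕ × ℕ | p.2 < α p.1 ∧ h ∣ hookLen α p.1 p.2}) := by
  exact stmt_17_aux n α hα h hh
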